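/- Let S be a nonempty closed subset of the circle ℝ/ℤ such that for every x ∈ S both 2x ∈ S and 3x ∈ S. Then either S is finite or S = ℝ/ℤ. -/

import Mathlib

open Set

local notation "𝕋" => AddCircle (1:ℝ)

lemma exists_lift (a : ℝ) (x : 𝕋) : ∃ r : ℝ, r ∈ Set.Ico a (a+1) ∧ (r:𝕋) = x := by
  let b := AddCircle.equivIco 1 a x
  exact ⟨b.1, b.2, (AddCircle.equivIco 1 a).symm_apply_apply x⟩

lemma coe_int_zero (m : ℤ) : (((m:ℝ)) : 𝕋) = 0 := by
  rw [AddCircle.coe_eq_zero_iff]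
  exact ⟨m, by simp⟩

lemma coe_sub_int (r : ℝ) (m : ℤ) : ((r - m : ℝ) : 𝕋) = (r : 𝕋) := by
  rw [AddCircle.coe_sub, coe_int_zero, sub_zero]

lemma norm_coe_le (r : ℝ) : ‖(r:𝕋)‖ ≤ |r| := by
  rw [AddCircle.norm_eq]
  simp only [inv_one, one_mul, mul_one]
  by_cases h : |r| < 1/2
  · have : round r = 0 := round_eq_zero_iff.mpr (by
      constructor
      · linarith [abs_le.mp h.le |>.1]
      · exact lt_of_le_of_lt (le_abs_self r) h)
    simp [this]
  · exact le_trans (abs_sub_round r) (not_lt.mp h)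

lemma norm_coe_le_sub (r : ℝ) (m : ℤ) : ‖(r:𝕋)‖ ≤ |r - m| := by
  rw [← coe_sub_int r m]; exact norm_coe_le _

lemma norm_coe_eq (r : ℝ) (h : r ∈ Set.Ico (-(1/2) : ℝ) ((-(1/2)) + 1)) : ‖(r:𝕋)‖ = |r| := by
  rw [AddCircle.norm_eq]
  simp only [inv_one, one_mul, mul_one]
  have : round r = 0 := round_eq_zero_iff.mpr ⟨h.1, by linarith [h.2]⟩
  simp [this]

lemma zsmul_coe (n : ℤ) (r : ℝ) : n • ((r:ℝ) : 𝕋) = ((n * r : ℝ) : 𝕋) := by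
  rw [← AddCircle.coe_zsmul, zsmul_eq_mul]

lemma coe_one_zero : ((1:ℝ) : 𝕋) = 0 := by
  have := coe_int_zero 1; simpa using this

-- 3^k ≠ 2^l when k ≥ 1
lemma pow23_ne {k l : ℕ} (hk : 1 ≤ k) : (3:ℕ)^k ≠ 2^l := by
  intro h
  rcases Nat.eq_zero_or_pos l with hl | hl
  · subst hl
    simp at h
    have : 3 ≤ 3^k := Nat.le_self_pow (by omega) 3
    omega
  · have h2 : 2 ∣ 2^l := dvd_pow_self 2 (by omega)
    rw [← h] at h2
    have := Nat.Prime.dvd_of_dvd_pow (p := 2) (n := k) Nat.prime_two h2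
    omega

-- independence of logs
lemma log_indep {s t : ℕ} (hs : 1 ≤ s) (ht : 1 ≤ t) (a : ℤ) (b : ℕ) (hb : 1 ≤ b) :
    (b : ℝ) * ((t:ℝ) * Real.log 3) ≠ (a : ℝ) * ((s:ℝ) * Real.log 2) := by
  intro h
  have l3 : 0 < Real.log 3 := Real.log_pos (by norm_num)
  have l2 : 0 < Real.log 2 := Real.log_pos (by norm_num)
  have hbpos : 0 < (b:ℝ) * ((t:ℝ) * Real.log 3) := by
    have hb' : (1:ℝ) ≤ b := by exact_mod_cast hb
    have ht' : (1:ℝ) ≤ t := by exact_mod_cast ht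
    positivity
  have hapos : 0 < (a:ℝ) := by
    rcases le_or_gt (a:ℝ) 0 with h0 | h0
    · exfalso
      have hs' : (0:ℝ) < (s:ℝ) * Real.log 2 := by
        have : (1:ℝ) ≤ s := by exact_mod_cast hs
        positivity
      have : (a:ℝ) * ((s:ℝ) * Real.log 2) ≤ 0 :=
        mul_nonpos_iff.mpr (Or.inr ⟨h0, hs'.le⟩)
      linarith
    · exact h0
  have ha0 : (0:ℤ) ≤ a := by exact_mod_cast hapos.le
  have hta : ((a.toNat : ℕ) : ℝ) = (a:ℝ) := by exact_mod_cast Int.toNat_of_nonneg ha0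
  -- rewrite as logs of powers
  have h3 : Real.log ((3:ℝ)^(b*t)) = Real.log ((2:ℝ)^(a.toNat*s)) := by
    rw [Real.log_pow, Real.log_pow]
    push_cast
    rw [hta]
    linarith [h]
  have hpow : ((3:ℝ))^(b*t) = ((2:ℝ))^(a.toNat*s) := by
    have h3p : (0:ℝ) < (3:ℝ)^(b*t) := by positivity
    have h2p : (0:ℝ) < (2:ℝ)^(a.toNat*s) := by positivity
    calc ((3:ℝ))^(b*t) = Real.exp (Real.log ((3:ℝ)^(b*t))) := (Real.exp_log h3p).symm
    _ = Real.exp (Real.log ((2:ℝ)^(a.toNat*s))) := by rw [h3]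
    _ = (2:ℝ)^(a.toNat*s) := Real.exp_log h2p
  have hnat : (3:ℕ)^(b*t) = 2^(a.toNat*s) := by exact_mod_cast hpow
  exact pow23_ne (Nat.mul_pos (by omega) (by omega)) hnat

-- Dirichlet-type: close pair in the semigroup Λ = {a p + b r}
lemma exists_close_pair (p r δ : ℝ) (hp : 0 < p) (hr : 0 < r)
    (hirr : ∀ (a : ℤ) (b : ℕ), 1 ≤ b → (b:ℝ) * r ≠ (a:ℝ) * p) (hδ : 0 < δ) :
    ∃ u v : ℝ, (∃ a b : ℕ, u = a * p + b * r) ∧ (∃ a b : ℕ, v = a * p + b * r) ∧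
      0 ≤ u ∧ u < v ∧ v - u ≤ δ := by
  obtain ⟨n, hn⟩ := exists_nat_gt (p / δ)
  have hn1 : 0 < n + 1 := Nat.succ_pos n
  obtain ⟨j, k, hk0, hkn, hjk⟩ := Real.exists_int_int_abs_mul_sub_le (r / p) hn1
  set e : ℝ := (k:ℝ) * r - (j:ℝ) * p with he
  have hkr : (k:ℝ) * (r/p) - j = e / p := by field_simp [he]; ring
  have hep : |e| ≤ p / ((n:ℝ) + 2) := by
    have h1 : |e / p| ≤ 1 / ((n:ℝ) + 1 + 1) := by rw [← hkr]; exact_mod_cast hjk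
    rw [abs_div, abs_of_pos hp, div_le_div_iff₀ hp (by positivity)] at h1
    rw [le_div_iff₀ (by positivity : (0:ℝ) < (n:ℝ) + 2)]
    nlinarith
  have heδ : |e| ≤ δ := by
    have hpδ : p / ((n:ℝ)+2) ≤ δ := by
      rw [div_le_iff₀ (by positivity)]
      have h1 : p < (n:ℝ) * δ := by
        rw [div_lt_iff₀ hδ] at hn; linarith
      nlinarith
    linarith
  have hkR : ((k.toNat : ℕ) : ℝ) = (k:ℝ) := by exact_mod_cast Int.toNat_of_nonneg hk0.le
  have hene : e ≠ 0 := by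
    intro h0
    have : (k.toNat : ℝ) * r = (j:ℝ) * p := by
      rw [hkR]; linarith [sub_eq_zero.mp h0]
    exact hirr j k.toNat (by omega) this
  rcases lt_or_gt_of_ne hene with hneg | hpos
  · -- e < 0 : u := k r, v := j p, j ≥ 1
    have hkrpos : (0:ℝ) < (k:ℝ) * r := by
      have : (0:ℝ) < (k:ℝ) := by exact_mod_cast hk0
      positivity
    have hjpos : 0 < (j:ℝ) * p := by nlinarith [sub_neg.mp hneg]
    have hj0 : 0 < j := by
      by_contra hc
      push_neg at hc
      have : (j:ℝ) ≤ 0 := by exact_mod_cast hc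
      nlinarith
    have hjR : ((j.toNat : ℕ) : ℝ) = (j:ℝ) := by exact_mod_cast Int.toNat_of_nonneg hj0.le
    refine ⟨(k:ℝ) * r, (j:ℝ) * p, ⟨0, k.toNat, by rw [hkR]; push_cast; ring⟩,
      ⟨j.toNat, 0, by rw [hjR]; push_cast; ring⟩, hkrpos.le, by linarith [sub_neg.mp hneg], ?_⟩
    rw [abs_of_neg hneg] at heδ
    have hee : e = (k:ℝ) * r - (j:ℝ) * p := he
    linarith
  · -- e > 0
    have hee : e = (k:ℝ) * r - (j:ℝ) * p := he
    rcases le_or_gt 0 j with hj0 | hj0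
    · have hjR : ((j.toNat : ℕ) : ℝ) = (j:ℝ) := by exact_mod_cast Int.toNat_of_nonneg hj0
      have hjnn : (0:ℝ) ≤ (j:ℝ) := by exact_mod_cast hj0
      refine ⟨(j:ℝ) * p, (k:ℝ) * r, ⟨j.toNat, 0, by rw [hjR]; push_cast; ring⟩,
        ⟨0, k.toNat, by rw [hkR]; push_cast; ring⟩, by positivity, by linarith, ?_⟩
      rw [abs_of_pos hpos] at heδ
      linarith
    · have hjR : (((-j).toNat : ℕ) : ℝ) = -(j:ℝ) := by
        have h' : (0:ℤ) ≤ -j := by omega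
        exact_mod_cast Int.toNat_of_nonneg h'
      refine ⟨0, ((-j).toNat : ℝ) * p + (k.toNat:ℝ) * r, ⟨0, 0, by push_cast; ring⟩,
        ⟨(-j).toNat, k.toNat, by push_cast; ring⟩, le_refl 0, ?_, ?_⟩
      · rw [hjR, hkR]
        linarith [hpos, hee]
      · rw [hjR, hkR]
        rw [abs_of_pos hpos] at heδ
        linarith [heδ, hee]

-- arithmetic progression combinations of u,v cover [Y,∞) with gaps ≤ δ
lemma prog_dense {u v δ : ℝ} (hu : 0 ≤ u) (huv : u < v) (hd : v - u ≤ δ) :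
    ∃ Y : ℝ, 0 ≤ Y ∧ ∀ y : ℝ, Y ≤ y → ∃ i j : ℕ,
      y ≤ i * u + j * v ∧ i * u + j * v ≤ y + δ := by
  have hv : 0 < v := lt_of_le_of_lt hu huv
  rcases eq_or_lt_of_le hu with hu0 | hu0
  · -- u = 0
    refine ⟨0, le_refl 0, fun y hy => ⟨0, ⌈y / v⌉₊, ?_, ?_⟩⟩
    · have h1 : y / v ≤ (⌈y / v⌉₊ : ℝ) := Nat.le_ceil _
      rw [div_le_iff₀ hv] at h1
      push_cast
      nlinarith
    · have h2 : (⌈y / v⌉₊ : ℝ) < y / v + 1 := Nat.ceil_lt_add_one (by positivity)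
      have h3 := mul_lt_mul_of_pos_right h2 hv
      rw [add_mul, div_mul_cancel₀ _ hv.ne', one_mul] at h3
      push_cast
      nlinarith
  · -- u > 0
    set d := v - u with hdd
    have hd0 : 0 < d := by rw [hdd]; linarith
    set m : ℕ := ⌈u / d⌉₊ with hm
    have hmu : u / d ≤ (m:ℝ) := Nat.le_ceil _
    refine ⟨((m:ℝ) + 2) * u, by positivity, fun y hy => ?_⟩
    have hypos : 0 < y := lt_of_lt_of_le (by positivity) hy
    set k : ℕ := ⌊y / u⌋₊ with hk
    have hkm : m + 2 ≤ k := by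
      rw [hk]
      apply Nat.le_floor
      rw [le_div_iff₀ hu0]
      push_cast
      linarith
    have hky : (k:ℝ) * u ≤ y := by
      have h1 := Nat.floor_le (by positivity : 0 ≤ y / u)
      rw [← hk, le_div_iff₀ hu0] at h1
      linarith
    have hky2 : y < ((k:ℝ) + 1) * u := by
      have h1 := Nat.lt_floor_add_one (y / u)
      rw [← hk, div_lt_iff₀ hu0] at h1
      linarith
    set w : ℝ := y - (k:ℝ) * u with hw
    have hw0 : 0 ≤ w := by rw [hw]; linarith
    have hwu : w < u := by rw [hw]; nlinarith
    set j : ℕ := ⌈w / d⌉₊ with hj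
    have hjd : w ≤ (j:ℝ) * d := by
      have h1 := Nat.le_ceil (w / d)
      rw [← hj, div_le_iff₀ hd0] at h1
      linarith
    have hjd2 : (j:ℝ) * d < w + d := by
      have h2 : (⌈w/d⌉₊ : ℝ) < w/d + 1 := Nat.ceil_lt_add_one (by positivity)
      rw [← hj] at h2
      have h3 := mul_lt_mul_of_pos_right h2 hd0
      rwa [add_mul, div_mul_cancel₀ _ hd0.ne', one_mul] at h3
    have hjm : j ≤ m := by
      have h1 : (j:ℝ) < (m:ℝ) + 1 := by
        have hwd : w / d < u / d := by gcongr
        have h2 : (⌈w/d⌉₊ : ℝ) < w/d + 1 := Nat.ceil_lt_add_one (div_nonneg hw0 hd0.le)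
        rw [← hj] at h2
        linarith
      exact_mod_cast Nat.lt_add_one_iff.mp (by exact_mod_cast h1)
    have hjk : j ≤ k := le_trans hjm (by omega)
    refine ⟨k - j, j, ?_, ?_⟩
    · have hcast : ((k - j : ℕ) : ℝ) = (k:ℝ) - (j:ℝ) := by
        push_cast [Nat.cast_sub hjk]; ring
      rw [hcast]
      have hveq : v = u + d := by rw [hdd]; ring
      rw [hveq]
      nlinarith
    · have hcast : ((k - j : ℕ) : ℝ) = (k:ℝ) - (j:ℝ) := by
        push_cast [Nat.cast_sub hjk]; ring
      rw [hcast]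
      have hveq : v = u + d := by rw [hdd]; ring
      rw [hveq]
      nlinarith

lemma kf {s t : ℕ} (hs : 1 ≤ s) (ht : 1 ≤ t) {δ : ℝ} (hδ : 0 < δ) :
    ∃ Y : ℝ, 0 ≤ Y ∧ ∀ y : ℝ, Y ≤ y → ∃ a b : ℕ,
      y ≤ (a:ℝ) * ((s:ℝ) * Real.log 2) + (b:ℝ) * ((t:ℝ) * Real.log 3) ∧
      (a:ℝ) * ((s:ℝ) * Real.log 2) + (b:ℝ) * ((t:ℝ) * Real.log 3) ≤ y + δ := by
  set p : ℝ := (s:ℝ) * Real.log 2 with hp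
  set r : ℝ := (t:ℝ) * Real.log 3 with hr
  have hp0 : 0 < p := by
    rw [hp]
    have : (1:ℝ) ≤ s := by exact_mod_cast hs
    have := Real.log_pos (by norm_num : (1:ℝ) < 2)
    positivity
  have hr0 : 0 < r := by
    rw [hr]
    have : (1:ℝ) ≤ t := by exact_mod_cast ht
    have := Real.log_pos (by norm_num : (1:ℝ) < 3)
    positivity
  obtain ⟨u, v, ⟨a₁, b₁, hu⟩, ⟨a₂, b₂, hv⟩, hu0, huv, hd⟩ :=
    exists_close_pair p r δ hp0 hr0 (fun a b hb => log_indep hs ht a b hb) hδ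
  obtain ⟨Y, hY0, hY⟩ := prog_dense hu0 huv hd
  refine ⟨Y, hY0, fun y hy => ?_⟩
  obtain ⟨i, j, h1, h2⟩ := hY y hy
  refine ⟨i*a₁ + j*a₂, i*b₁ + j*b₂, ?_, ?_⟩
  · have : ((i*a₁ + j*a₂ : ℕ):ℝ) * p + ((i*b₁ + j*b₂ : ℕ):ℝ) * r = i*u + j*v := by
      rw [hu, hv]; push_cast; ring
    rw [this]; exact h1
  · have : ((i*a₁ + j*a₂ : ℕ):ℝ) * p + ((i*b₁ + j*b₂ : ℕ):ℝ) * r = i*u + j*v := by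
      rw [hu, hv]; push_cast; ring
    rw [this]; exact h2

lemma lb_core {s t : ℕ} (hs : 1 ≤ s) (ht : 1 ≤ t) (τ : 𝕋) {ε : ℝ} (hε : 0 < ε) :
    ∃ η : ℝ, 0 < η ∧ ∀ u : 𝕋, u ≠ 0 → ‖u‖ < η → ∃ a b : ℕ,
      ‖((2^(s*a) * 3^(t*b) : ℕ) : ℤ) • u - τ‖ ≤ ε := by
  set ε' : ℝ := min ε 1 with hε'
  have hε'0 : 0 < ε' := lt_min hε one_pos
  have hε'ε : ε' ≤ ε := min_le_left _ _
  have hε'1 : ε' ≤ 1 := min_le_right _ _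
  set δ : ℝ := Real.log (1 + ε'/2) with hδdef
  have hδ0 : 0 < δ := Real.log_pos (by linarith)
  obtain ⟨Y, hY0, hY⟩ := kf hs ht hδ0
  refine ⟨Real.exp (-Y), Real.exp_pos _, fun u hu hunorm => ?_⟩
  obtain ⟨w, hwI, hwu⟩ := exists_lift (-(1/2)) u
  have hww : ‖u‖ = |w| := by rw [← hwu]; exact norm_coe_eq w hwI
  have hw0 : w ≠ 0 := by
    intro h
    apply hu
    rw [← hwu, h]
    exact QuotientAddGroup.mk_zero _
  set v : ℝ := |w| with hv
  have hv0 : 0 < v := abs_pos.mpr hw0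
  have hvη : v < Real.exp (-Y) := by rw [← hww]; exact hunorm
  have claim : ∀ z : ℝ, 0 ≤ z → z < 1 → ∃ a b : ℕ,
      1 + z ≤ ((2^(s*a) * 3^(t*b) : ℕ) : ℝ) * v ∧
      ((2^(s*a) * 3^(t*b) : ℕ) : ℝ) * v ≤ 1 + z + ε' := by
    intro z hz0 hz1
    set y : ℝ := Real.log (1+z) - Real.log v with hydef
    have hyY : Y ≤ y := by
      have h1 : Real.log v < -Y := by
        calc Real.log v < Real.log (Real.exp (-Y)) := Real.log_lt_log hv0 hvη
        _ = -Y := Real.log_exp _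
      have h2 : 0 ≤ Real.log (1+z) := Real.log_nonneg (by linarith)
      rw [hydef]; linarith
    obtain ⟨a, b, h1, h2⟩ := hY y hyY
    refine ⟨a, b, ?_, ?_⟩
    · -- 1 + z ≤ N * v
      have hcast : ((2^(s*a) * 3^(t*b) : ℕ) : ℝ) = (2:ℝ)^(s*a) * (3:ℝ)^(t*b) := by push_cast; ring
      have hN0 : (0:ℝ) < ((2^(s*a) * 3^(t*b) : ℕ) : ℝ) := by rw [hcast]; positivity
      have hlogN : Real.log ((2^(s*a) * 3^(t*b) : ℕ) : ℝ)
          = (a:ℝ) * ((s:ℝ) * Real.log 2) + (b:ℝ) * ((t:ℝ) * Real.log 3) := by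
        rw [hcast, Real.log_mul (by positivity) (by positivity), Real.log_pow, Real.log_pow]
        push_cast; ring
      have hlog : Real.log (1+z) ≤ Real.log (((2^(s*a) * 3^(t*b) : ℕ) : ℝ) * v) := by
        rw [Real.log_mul hN0.ne' hv0.ne', hlogN]
        rw [hydef] at h1
        linarith
      calc 1 + z = Real.exp (Real.log (1+z)) := (Real.exp_log (by linarith)).symm
      _ ≤ Real.exp (Real.log (((2^(s*a) * 3^(t*b) : ℕ) : ℝ) * v)) := Real.exp_le_exp.mpr hlog
      _ = ((2^(s*a) * 3^(t*b) : ℕ) : ℝ) * v := Real.exp_log (by positivity)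
    · have hcast : ((2^(s*a) * 3^(t*b) : ℕ) : ℝ) = (2:ℝ)^(s*a) * (3:ℝ)^(t*b) := by push_cast; ring
      have hN0 : (0:ℝ) < ((2^(s*a) * 3^(t*b) : ℕ) : ℝ) := by rw [hcast]; positivity
      have hlogN : Real.log ((2^(s*a) * 3^(t*b) : ℕ) : ℝ)
          = (a:ℝ) * ((s:ℝ) * Real.log 2) + (b:ℝ) * ((t:ℝ) * Real.log 3) := by
        rw [hcast, Real.log_mul (by positivity) (by positivity), Real.log_pow, Real.log_pow]
        push_cast; ring
      have hlog : Real.log (((2^(s*a) * 3^(t*b) : ℕ) : ℝ) * v) ≤ Real.log (1+z) + δ := by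
        rw [Real.log_mul hN0.ne' hv0.ne', hlogN]
        rw [hydef] at h2
        linarith
      have hup : ((2^(s*a) * 3^(t*b) : ℕ) : ℝ) * v ≤ (1+z) * (1 + ε'/2) := by
        calc ((2^(s*a) * 3^(t*b) : ℕ) : ℝ) * v
            = Real.exp (Real.log (((2^(s*a) * 3^(t*b) : ℕ) : ℝ) * v)) :=
              (Real.exp_log (by positivity)).symm
        _ ≤ Real.exp (Real.log (1+z) + δ) := Real.exp_le_exp.mpr hlog
        _ = (1+z) * (1 + ε'/2) := by
            rw [Real.exp_add, Real.exp_log (by linarith), hδdef, Real.exp_log (by linarith)]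
      nlinarith
  rcases lt_or_gt_of_ne hw0 with hwneg | hwpos
  · -- w < 0 : use lift of -τ
    obtain ⟨z₂, hz₂I, hz₂⟩ := exists_lift 0 (-τ)
    have hz₂0 : 0 ≤ z₂ := by simpa using hz₂I.1
    have hz₂1 : z₂ < 1 := by
      have := hz₂I.2; simpa using this
    obtain ⟨a, b, hl, hr⟩ := claim z₂ hz₂0 hz₂1
    refine ⟨a, b, ?_⟩
    have hveq : v = -w := abs_of_neg hwneg
    have hsmul : ((2^(s*a) * 3^(t*b) : ℕ) : ℤ) • u
        = ((((2^(s*a) * 3^(t*b) : ℕ) : ℝ) * w : ℝ) : 𝕋) := by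
      rw [← hwu, zsmul_coe]
      push_cast
      ring_nf
    rw [hsmul, sub_eq_add_neg, ← hz₂, ← AddCircle.coe_add]
    refine le_trans (norm_coe_le_sub _ (-1)) ?_
    rw [hveq] at hl hr
    push_cast at hl hr ⊢
    rw [abs_le]
    constructor
    · linarith
    · linarith
  · -- w > 0 : use lift of τ
    obtain ⟨z₁, hz₁I, hz₁⟩ := exists_lift 0 τ
    have hz₁0 : 0 ≤ z₁ := by simpa using hz₁I.1
    have hz₁1 : z₁ < 1 := by
      have := hz₁I.2; simpa using this
    obtain ⟨a, b, hl, hr⟩ := claim z₁ hz₁0 hz₁1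
    refine ⟨a, b, ?_⟩
    have hveq : v = w := abs_of_pos hwpos
    have hsmul : ((2^(s*a) * 3^(t*b) : ℕ) : ℤ) • u
        = ((((2^(s*a) * 3^(t*b) : ℕ) : ℝ) * w : ℝ) : 𝕋) := by
      rw [← hwu, zsmul_coe]
      push_cast
      ring_nf
    rw [hsmul, ← hz₁, ← AddCircle.coe_sub]
    refine le_trans (norm_coe_le_sub _ 1) ?_
    rw [hveq] at hl hr
    push_cast at hl hr ⊢
    rw [abs_le]
    constructor
    · linarith
    · linarith

/-- accumulation point of `A` -/
def IsAcc (A : Set 𝕋) (z : 𝕋) : Prop := ∀ ε : ℝ, 0 < ε → ∃ y ∈ A, y ≠ z ∧ dist y z < ε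

lemma isAcc_mem_closure {A : Set 𝕋} {z : 𝕋} (h : IsAcc A z) : z ∈ closure A := by
  rw [Metric.mem_closure_iff]
  intro ε hε
  obtain ⟨y, hyA, _, hd⟩ := h ε hε
  exact ⟨y, hyA, by rwa [dist_comm]⟩

lemma isClosed_isAcc (A : Set 𝕋) : IsClosed {z | IsAcc A z} := by
  rw [← closure_subset_iff_isClosed]
  intro z hz ε hε
  rw [Metric.mem_closure_iff] at hz
  obtain ⟨w, hw, hwz⟩ := hz (ε/2) (by linarith)
  rcases eq_or_ne w z with rfl | hne
  · exact hw ε hε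
  · have hdz : 0 < dist w z := dist_pos.mpr hne
    obtain ⟨y, hyA, hyw, hyd⟩ := hw (min (ε/2) (dist w z)) (lt_min (by linarith) hdz)
    refine ⟨y, hyA, ?_, ?_⟩
    · intro h
      subst h
      have := lt_of_lt_of_le hyd (min_le_right _ _)
      rw [dist_comm] at this
      exact lt_irrefl _ this
    · have h1 := lt_of_lt_of_le hyd (min_le_left _ _)
      calc dist y z ≤ dist y w + dist w z := dist_triangle _ _ _
      _ < ε/2 + ε/2 := by have h2 := hwz; rw [dist_comm] at h2; linarith
      _ = ε := by ring

-- small torsion is zero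
lemma eq_zero_of_small_torsion {N : ℕ} (hN : 1 ≤ N) {x : 𝕋} (h : (N:ℤ) • x = 0)
    (hs : ‖x‖ < 1/N) : x = 0 := by
  obtain ⟨w, hwI, hwx⟩ := exists_lift (-(1/2)) x
  have hww : ‖x‖ = |w| := by rw [← hwx]; exact norm_coe_eq w hwI
  rw [← hwx, zsmul_coe] at h
  rw [AddCircle.coe_eq_zero_iff] at h
  obtain ⟨k, hk⟩ := h
  have hk' : (k:ℝ) = (N:ℝ) * w := by
    have h2 := hk
    rw [zsmul_eq_mul, mul_one] at h2
    push_cast at h2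
    exact h2
  have hNpos : (0:ℝ) < N := by exact_mod_cast hN
  have habs : |(k:ℝ)| < 1 := by
    rw [hk', abs_mul, abs_of_pos hNpos]
    rw [hww] at hs
    calc (N:ℝ) * |w| < (N:ℝ) * (1/N) := by
          apply mul_lt_mul_of_pos_left hs hNpos
    _ = 1 := by field_simp
  have hk0 : k = 0 := by
    have h2 : |k| < 1 := by exact_mod_cast habs
    rw [abs_lt] at h2
    omega
  have hw0 : w = 0 := by
    rw [hk0] at hk'
    have : (0:ℝ) = (N:ℝ) * w := by exact_mod_cast hk'
    have := this.symm
    rcases mul_eq_zero.mp this with h | h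
    · exact absurd h (ne_of_gt hNpos)
    · exact h
  rw [← hwx, hw0]
  exact QuotientAddGroup.mk_zero _

-- multiplication by N maps acc points to acc points (for N-invariant sets)
lemma isAcc_smul {A : Set 𝕋} {z : 𝕋} (hz : IsAcc A z) {N : ℕ} (hN : 1 ≤ N)
    (hA : ∀ x ∈ A, (N:ℤ) • x ∈ A) : IsAcc A ((N:ℤ) • z) := by
  intro ε hε
  have hNpos : (0:ℝ) < N := by exact_mod_cast hN
  obtain ⟨y, hyA, hyz, hyd⟩ := hz (min (ε/N) (1/N)) (lt_min (by positivity) (by positivity))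
  refine ⟨(N:ℤ) • y, hA y hyA, ?_, ?_⟩
  · intro h
    have h0 : (N:ℤ) • (y - z) = 0 := by
      rw [smul_sub, h, sub_self]
    have hnorm : ‖y - z‖ < 1/N := by
      rw [← dist_eq_norm]
      exact lt_of_lt_of_le hyd (min_le_right _ _)
    have := eq_zero_of_small_torsion hN h0 hnorm
    exact hyz (sub_eq_zero.mp this)
  · have h1 : dist ((N:ℤ)•y) ((N:ℤ)•z) = ‖(N:ℤ) • (y - z)‖ := by
      rw [dist_eq_norm, ← smul_sub]
    obtain ⟨w, hwI, hwx⟩ := exists_lift (-(1/2)) (y - z)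
    have hww : ‖y - z‖ = |w| := by rw [← hwx]; exact norm_coe_eq w hwI
    rw [h1, ← hwx, zsmul_coe]
    calc ‖((((N:ℤ):ℝ) * w : ℝ) : 𝕋)‖ ≤ |((N:ℤ):ℝ) * w| := norm_coe_le _
    _ = (N:ℝ) * |w| := by rw [abs_mul]; push_cast; rw [abs_of_pos hNpos]
    _ < (N:ℝ) * (ε/N) := by
        apply mul_lt_mul_of_pos_left ?_ hNpos
        rw [← hww, ← dist_eq_norm]
        exact lt_of_lt_of_le hyd (min_le_left _ _)
    _ = ε := by field_simp

-- an infinite closed set has an accumulation point in itself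
lemma exists_isAcc_of_infinite {A : Set 𝕋} (hA : A.Infinite) (hcl : IsClosed A) :
    ∃ z ∈ A, IsAcc A z := by
  have hcomp : IsCompact A := hcl.isCompact
  let f := hA.natEmbedding
  obtain ⟨z, hzA, φ, hφ, hconv⟩ := hcomp.tendsto_subseq (x := fun n => (f n : 𝕋)) (fun n => (f n).2)
  refine ⟨z, hzA, fun ε hε => ?_⟩
  obtain ⟨N₀, hN₀⟩ := Metric.tendsto_atTop.mp hconv ε hε
  rcases eq_or_ne ((f (φ N₀) : 𝕋)) z with h | h
  · refine ⟨(f (φ (N₀+1)) : 𝕋), (f (φ (N₀+1))).2, ?_, hN₀ (N₀+1) (by omega)⟩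
    intro h2
    have : f (φ (N₀+1)) = f (φ N₀) := by
      apply Subtype.ext
      rw [h2, h]
    have := f.injective this
    have := hφ.injective this
    omega
  · exact ⟨(f (φ N₀) : 𝕋), (f (φ N₀)).2, h, hN₀ N₀ (le_refl _)⟩



/-- invariance under the sub-semigroup generated by 2^s and 3^t -/
def Inv2 (s t : ℕ) (A : Set 𝕋) : Prop :=
  ∀ x ∈ A, ∀ a b : ℕ, ((2^(s*a) * 3^(t*b) : ℕ) : ℤ) • x ∈ A

def TorsionFree (A : Set 𝕋) : Prop := ∀ x ∈ A, ∀ m : ℕ, 1 ≤ m → (m:ℤ) • x ≠ 0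

lemma infinite_of_torsionFree {s t : ℕ} (hs : 1 ≤ s) {A : Set 𝕋} (hne : A.Nonempty)
    (hinv : Inv2 s t A) (htf : TorsionFree A) : A.Infinite := by
  obtain ⟨x₀, hx₀⟩ := hne
  have key : ∀ m m' : ℕ, m < m' →
      ((2^(s*m) * 3^(t*0) : ℕ) : ℤ) • x₀ ≠ ((2^(s*m') * 3^(t*0) : ℕ) : ℤ) • x₀ := by
    intro m m' hlt heq
    have hp : (2:ℕ)^(s*m) < 2^(s*m') := by
      apply Nat.pow_lt_pow_right (by omega)
      exact mul_lt_mul_of_pos_left hlt (by omega : 0 < s)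
    set d : ℤ := ((2^(s*m') * 3^(t*0) : ℕ) : ℤ) - ((2^(s*m) * 3^(t*0) : ℕ) : ℤ) with hdd
    have hdpos : 0 < d := by
      rw [hdd]
      simp only [Nat.mul_zero, pow_zero, mul_one]
      push_cast
      have : (2:ℤ)^(s*m) < 2^(s*m') := by exact_mod_cast hp
      omega
    have h0 : d • x₀ = 0 := by
      rw [hdd, sub_smul, ← heq, sub_self]
    have hnz : ((d.toNat : ℕ) : ℤ) • x₀ ≠ 0 := htf x₀ hx₀ d.toNat (by omega)
    rw [Int.toNat_of_nonneg hdpos.le] at hnz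
    exact hnz h0
  apply Set.infinite_of_injective_forall_mem
    (f := fun m : ℕ => ((2^(s*m) * 3^(t*0) : ℕ) : ℤ) • x₀)
  · intro m m' hmm'
    by_contra hne'
    rcases lt_trichotomy m m' with h | h | h
    · exact key m m' h hmm'
    · exact hne' h
    · exact key m' m h hmm'.symm
  · intro m
    exact hinv x₀ hx₀ m 0

-- The core step: a closed invariant torsion-free set contains x with x + τ ∈ A
lemma exists_add_tau {s t : ℕ} (hs : 1 ≤ s) (ht : 1 ≤ t) {A : Set 𝕋} (hne : A.Nonempty)
    (hcl : IsClosed A) (hinv : Inv2 s t A) (htf : TorsionFree A) (τ : 𝕋) :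
    ∃ x ∈ A, x + τ ∈ A := by
  have hinf := infinite_of_torsionFree hs hne hinv htf
  obtain ⟨z, hzA, hz⟩ := exists_isAcc_of_infinite hinf hcl
  have key : ∀ ε : ℝ, 0 < ε → ∃ x ∈ A, ∃ b ∈ A, ‖b - x - τ‖ ≤ ε := by
    intro ε hε
    obtain ⟨η, hη, hcore⟩ := lb_core hs ht τ hε
    obtain ⟨y, hyA, hyz, hd⟩ := hz η hη
    have hu : y - z ≠ 0 := sub_ne_zero.mpr hyz
    have hn : ‖y - z‖ < η := by rw [← dist_eq_norm]; exact hd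
    obtain ⟨a, b, hab⟩ := hcore (y - z) hu hn
    refine ⟨((2^(s*a) * 3^(t*b) : ℕ) : ℤ) • z, hinv z hzA a b,
      ((2^(s*a) * 3^(t*b) : ℕ) : ℤ) • y, hinv y hyA a b, ?_⟩
    rw [show ((2^(s*a) * 3^(t*b) : ℕ) : ℤ) • y - ((2^(s*a) * 3^(t*b) : ℕ) : ℤ) • z
        = ((2^(s*a) * 3^(t*b) : ℕ) : ℤ) • (y - z) by rw [smul_sub]]
    exact hab
  -- nested compact sets
  set D : ℕ → Set 𝕋 := fun n => closure {x ∈ A | ∃ b ∈ A, ‖b - x - τ‖ ≤ 1/(n+1)} with hD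
  have hDne : ∀ n, (D n).Nonempty := by
    intro n
    obtain ⟨x, hx, b, hb, hle⟩ := key (1/(n+1)) (by positivity)
    exact ⟨x, subset_closure ⟨hx, b, hb, hle⟩⟩
  have hDcl : ∀ n, IsClosed (D n) := fun n => isClosed_closure
  have hDmono : ∀ n, D (n+1) ⊆ D n := by
    intro n
    apply closure_mono
    rintro x ⟨hxA, b, hbA, hle⟩
    refine ⟨hxA, b, hbA, le_trans hle ?_⟩
    apply one_div_le_one_div_of_le (by positivity)
    push_cast
    linarith
  have hDcomp : IsCompact (D 0) := (hDcl 0).isCompact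
  obtain ⟨x, hx⟩ := IsCompact.nonempty_iInter_of_sequence_nonempty_isCompact_isClosed
    D hDmono hDne hDcomp hDcl
  have hxA : x ∈ A := by
    have h0 : x ∈ D 0 := mem_iInter.mp hx 0
    have : D 0 ⊆ closure A := closure_mono (fun y hy => hy.1)
    rw [hcl.closure_eq] at this
    exact this h0
  refine ⟨x, hxA, ?_⟩
  have : x + τ ∈ closure A := by
    rw [Metric.mem_closure_iff]
    intro ε hε
    obtain ⟨n, hn⟩ := exists_nat_one_div_lt (ε := ε/2) (by linarith)
    have hxn : x ∈ D n := mem_iInter.mp hx n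
    rw [hD, Metric.mem_closure_iff] at hxn
    obtain ⟨x', hx', hxx'⟩ := hxn (ε/2) (by linarith)
    obtain ⟨hx'A, b, hbA, hble⟩ := hx'
    refine ⟨b, hbA, ?_⟩
    have h1 : dist (x + τ) (x' + τ) = dist x x' := by
      rw [dist_eq_norm, dist_eq_norm, add_sub_add_right_eq_sub]
    have h2 : dist (x' + τ) b = ‖b - x' - τ‖ := by
      rw [dist_comm, dist_eq_norm, sub_add_eq_sub_sub]
    calc dist (x + τ) b ≤ dist (x + τ) (x' + τ) + dist (x' + τ) b := dist_triangle _ _ _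
    _ ≤ ε/2 + (1/(n+1)) := by
        rw [h1, h2]
        exact add_le_add hxx'.le hble
    _ < ε := by linarith
  rwa [hcl.closure_eq] at this



-- If moreover the semigroup fixes τ, we can iterate.
lemma exists_progression {s t : ℕ} (hs : 1 ≤ s) (ht : 1 ≤ t) {A : Set 𝕋} (hne : A.Nonempty)
    (hcl : IsClosed A) (hinv : Inv2 s t A) (htf : TorsionFree A) (τ : 𝕋)
    (hτ : ∀ a b : ℕ, ((2^(s*a) * 3^(t*b) : ℕ) : ℤ) • τ = τ) (K : ℕ) :
    ∃ x, ∀ j : ℕ, j ≤ K → x + (j:ℤ) • τ ∈ A := by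
  -- iterated refinement sets
  let C : ℕ → Set 𝕋 := fun k => Nat.rec A (fun _ Ck => {x ∈ Ck | x + τ ∈ Ck}) k
  have hC0 : C 0 = A := rfl
  have hCsucc : ∀ k, C (k+1) = {x ∈ C k | x + τ ∈ C k} := fun k => rfl
  have hgood : ∀ k, (C k).Nonempty ∧ IsClosed (C k) ∧ Inv2 s t (C k) ∧ TorsionFree (C k) := by
    intro k
    induction k with
    | zero => exact ⟨hne, hcl, hinv, htf⟩
    | succ k ih =>
      obtain ⟨ihne, ihcl, ihinv, ihtf⟩ := ih
      have hinv' : Inv2 s t (C (k+1)) := by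
        rw [hCsucc]
        rintro x ⟨hx1, hx2⟩ a b
        refine ⟨ihinv x hx1 a b, ?_⟩
        have : ((2^(s*a) * 3^(t*b) : ℕ) : ℤ) • x + τ
            = ((2^(s*a) * 3^(t*b) : ℕ) : ℤ) • (x + τ) := by
          rw [smul_add, hτ]
        rw [this]
        exact ihinv _ hx2 a b
      have hcl' : IsClosed (C (k+1)) := by
        rw [hCsucc]
        have : {x ∈ C k | x + τ ∈ C k} = C k ∩ ((fun x => x + τ) ⁻¹' (C k)) := rfl
        rw [this]
        exact ihcl.inter (ihcl.preimage (continuous_add_right τ))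
      have htf' : TorsionFree (C (k+1)) := by
        rw [hCsucc]
        rintro x ⟨hx1, _⟩
        exact ihtf x hx1
      have hne' : (C (k+1)).Nonempty := by
        rw [hCsucc]
        obtain ⟨x, hx1, hx2⟩ := exists_add_tau hs ht ihne ihcl ihinv ihtf τ
        exact ⟨x, hx1, hx2⟩
      exact ⟨hne', hcl', hinv', htf'⟩
  -- extract a point of C K; it has the progression property
  have hsub : ∀ k, ∀ x ∈ C (k+1), x ∈ C k ∧ x + τ ∈ C k := by
    intro k x hx
    rw [hCsucc] at hx
    exact hx
  have main : ∀ k, ∀ x ∈ C k, ∀ j : ℕ, j ≤ k → x + (j:ℤ) • τ ∈ A := by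
    intro k
    induction k with
    | zero =>
      intro x hx j hj
      interval_cases j
      simpa using (show x ∈ A from hx)
    | succ k ih =>
      intro x hx j hj
      rcases Nat.eq_zero_or_pos j with rfl | hj0
      · have hxk : x ∈ C k := (hsub k x hx).1
        simpa using ih x hxk 0 (by omega)
      · obtain ⟨j', rfl⟩ : ∃ j', j = j' + 1 := ⟨j - 1, by omega⟩
        have hxt : x + τ ∈ C k := (hsub k x hx).2
        have := ih (x + τ) hxt j' (by omega)
        have heq : x + τ + (j':ℤ) • τ = x + ((j'+1 : ℕ):ℤ) • τ := by
          push_cast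
          rw [add_smul, one_smul]
          abel
        rwa [heq] at this
  obtain ⟨x, hx⟩ := (hgood K).1
  exact ⟨x, fun j hj => main K x hx j hj⟩



-- closure under all products 2^m 3^n from closure under 2 and 3
lemma pow23_mem {A : Set 𝕋} (h2 : ∀ x ∈ A, (2:ℤ) • x ∈ A) (h3 : ∀ x ∈ A, (3:ℤ) • x ∈ A) :
    ∀ x ∈ A, ∀ m n : ℕ, ((2^m * 3^n : ℕ) : ℤ) • x ∈ A := by
  have htwo : ∀ m : ℕ, ∀ x ∈ A, ((2^m : ℕ) : ℤ) • x ∈ A := by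
    intro m
    induction m with
    | zero => intro x hx; simpa using hx
    | succ m ih =>
      intro x hx
      have hc : ((2^(m+1) : ℕ) : ℤ) = 2 * ((2^m : ℕ) : ℤ) := by push_cast; ring
      rw [hc, mul_smul]
      exact h2 _ (ih x hx)
  have hthree : ∀ n : ℕ, ∀ x ∈ A, ((3^n : ℕ) : ℤ) • x ∈ A := by
    intro n
    induction n with
    | zero => intro x hx; simpa using hx
    | succ n ih =>
      intro x hx
      have hc : ((3^(n+1) : ℕ) : ℤ) = 3 * ((3^n : ℕ) : ℤ) := by push_cast; ring
      rw [hc, mul_smul]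
      exact h3 _ (ih x hx)
  intro x hx m n
  have hc : ((2^m * 3^n : ℕ) : ℤ) = ((2^m : ℕ) : ℤ) * ((3^n : ℕ) : ℤ) := by push_cast; ring
  rw [hc, mul_smul]
  exact htwo m _ (hthree n x hx)

-- semigroup elements ≡ 1 mod q fix q-torsion points
lemma Nsmul_tau_eq {q s t : ℕ} (h2 : (2:ℕ)^s ≡ 1 [MOD q]) (h3 : (3:ℕ)^t ≡ 1 [MOD q])
    {τ : 𝕋} (h0 : (q:ℤ) • τ = 0) (a b : ℕ) :
    ((2^(s*a) * 3^(t*b) : ℕ) : ℤ) • τ = τ := by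
  have e2 : (2:ℕ)^(s*a) ≡ 1 [MOD q] := by
    rw [pow_mul]
    simpa using h2.pow a
  have e3 : (3:ℕ)^(t*b) ≡ 1 [MOD q] := by
    rw [pow_mul]
    simpa using h3.pow b
  have hmod : (2:ℕ)^(s*a) * 3^(t*b) ≡ 1 [MOD q] := by
    simpa using e2.mul e3
  have hdvd : (q:ℤ) ∣ ((2^(s*a) * 3^(t*b) : ℕ) : ℤ) - 1 := by
    have := (Nat.modEq_iff_dvd).mp hmod.symm
    simpa using this
  obtain ⟨c, hc⟩ := hdvd
  have hN : ((2^(s*a) * 3^(t*b) : ℕ) : ℤ) = 1 + (q:ℤ) * c := by omega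
  rw [hN, add_smul, one_smul, mul_comm, mul_smul, h0, smul_zero, add_zero]

-- the key lemma in the torsion case
lemma dense_of_torsion_acc {S : Set 𝕋} (hcl : IsClosed S)
    (hpow : ∀ x ∈ S, ∀ m n : ℕ, ((2^m * 3^n : ℕ) : ℤ) • x ∈ S)
    {r : 𝕋} (hrS : r ∈ S) (hacc : IsAcc S r) {m : ℕ} (hm : 1 ≤ m)
    (h0 : (m:ℤ) • r = 0) : Dense S := by
  classical
  -- factor m = 2^e2 * 3^e3 * q with q coprime to 6
  set e2 : ℕ := m.factorization 2 with he2
  set m1 : ℕ := m / 2^e2 with hm1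
  set e3 : ℕ := m1.factorization 3 with he3
  set q : ℕ := m1 / 3^e3 with hq
  have hm0 : m ≠ 0 := by omega
  have hfact1 : 2^e2 * m1 = m := Nat.ordProj_mul_ordCompl_eq_self m 2
  have hm10 : m1 ≠ 0 := by
    intro h
    rw [h, mul_zero] at hfact1
    omega
  have hfact2 : 3^e3 * q = m1 := Nat.ordProj_mul_ordCompl_eq_self m1 3
  have hq0 : q ≠ 0 := by
    intro h
    rw [h, mul_zero] at hfact2
    omega
  have hnd2 : ¬ 2 ∣ m1 := Nat.not_dvd_ordCompl Nat.prime_two hm0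
  have hnd3 : ¬ 3 ∣ q := Nat.not_dvd_ordCompl Nat.prime_three hm10
  have hqdvd : q ∣ m1 := Nat.ordCompl_dvd m1 3
  have hnd2q : ¬ 2 ∣ q := fun h => hnd2 (h.trans hqdvd)
  -- move to r₂ of order dividing q
  set N0 : ℕ := 2^e2 * 3^e3 with hN0
  have hN01 : 1 ≤ N0 := by
    have h' : 0 < N0 := by rw [hN0]; positivity
    omega
  set r₂ : 𝕋 := ((N0 : ℕ) : ℤ) • r with hr₂
  have hr₂S : r₂ ∈ S := by
    rw [hr₂, hN0]
    exact hpow r hrS e2 e3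
  have hr₂acc : IsAcc S r₂ := by
    rw [hr₂]
    apply isAcc_smul hacc hN01
    intro x hx
    have := hpow x hx e2 e3
    rwa [hN0]
  have hq0' : (q:ℤ) • r₂ = 0 := by
    rw [hr₂, smul_smul]
    have hqN : (q:ℤ) * (N0:ℤ) = (m:ℤ) := by
      have : q * N0 = m := by
        rw [hN0, ← hfact1, ← hfact2]
        ring
      exact_mod_cast this
    rw [hqN, h0]
  -- the subsemigroup fixing r₂ : s = t = φ(q)
  set s : ℕ := q.totient with hst
  have hs : 1 ≤ s := Nat.totient_pos.mpr (Nat.pos_of_ne_zero hq0)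
  have hc2 : Nat.Coprime 2 q := (Nat.Prime.coprime_iff_not_dvd Nat.prime_two).mpr hnd2q
  have hc3 : Nat.Coprime 3 q := (Nat.Prime.coprime_iff_not_dvd Nat.prime_three).mpr hnd3
  have h2mod : (2:ℕ)^s ≡ 1 [MOD q] := Nat.ModEq.pow_totient hc2
  have h3mod : (3:ℕ)^s ≡ 1 [MOD q] := Nat.ModEq.pow_totient hc3
  have hfix : ∀ a b : ℕ, ((2^(s*a) * 3^(s*b) : ℕ) : ℤ) • r₂ = r₂ :=
    fun a b => Nsmul_tau_eq h2mod h3mod hq0' a b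
  -- translated set B
  set B : Set 𝕋 := {x | x + r₂ ∈ S} with hB
  have hBcl : IsClosed B := hcl.preimage (continuous_add_right r₂)
  have hBinv : Inv2 s s B := by
    intro x hx a b
    have hmem : ((2^(s*a) * 3^(s*b) : ℕ) : ℤ) • (x + r₂) ∈ S := hpow _ hx (s*a) (s*b)
    rw [smul_add, hfix a b] at hmem
    exact hmem
  have hBacc0 : IsAcc B 0 := by
    intro ε hε
    obtain ⟨y, hyS, hyne, hyd⟩ := hr₂acc ε hε
    refine ⟨y - r₂, ?_, ?_, ?_⟩
    · show (y - r₂) + r₂ ∈ S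
      rwa [sub_add_cancel]
    · exact sub_ne_zero.mpr hyne
    · rwa [dist_zero_right, ← dist_eq_norm]
  -- B is dense
  have hBdense : Dense B := by
    intro w
    rw [Metric.mem_closure_iff]
    intro ε hε
    obtain ⟨η, hη0, hcore⟩ := lb_core hs hs w (show (0:ℝ) < ε/2 by linarith)
    obtain ⟨u, huB, hune, hud⟩ := hBacc0 η hη0
    rw [dist_zero_right] at hud
    obtain ⟨a, b, hab⟩ := hcore u hune hud
    refine ⟨((2^(s*a) * 3^(s*b) : ℕ) : ℤ) • u, hBinv u huB a b, ?_⟩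
    rw [dist_comm, dist_eq_norm]
    calc ‖((2^(s*a) * 3^(s*b) : ℕ) : ℤ) • u - w‖ ≤ ε/2 := hab
    _ < ε := by linarith
  -- S is dense
  intro x
  rw [Metric.mem_closure_iff]
  intro ε hε
  have := hBdense (x - r₂)
  rw [Metric.mem_closure_iff] at this
  obtain ⟨b, hbB, hbd⟩ := this ε hε
  refine ⟨b + r₂, hbB, ?_⟩
  calc dist x (b + r₂) = dist (x - r₂) b := by
        rw [dist_eq_norm, dist_eq_norm]
        congr 1
        abel
  _ < ε := hbd



/-- Furstenberg's theorem: a nonempty closed subset of the circle `ℝ/ℤ`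
invariant under multiplication by `2` and by `3` is either finite or the whole
circle. -/
theorem furstenberg_times_two_times_three
    (S : Set (AddCircle (1 : ℝ))) (hne : S.Nonempty) (hclosed : IsClosed S)
    (h2 : ∀ x ∈ S, (2 : ℤ) • x ∈ S) (h3 : ∀ x ∈ S, (3 : ℤ) • x ∈ S) :
    S.Finite ∨ S = Set.univ := by
  by_cases hfin : S.Finite
  · exact Or.inl hfin
  right
  have hpow : ∀ x ∈ S, ∀ m n : ℕ, ((2^m * 3^n : ℕ) : ℤ) • x ∈ S := pow23_mem h2 h3
  suffices hd : Dense S by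
    rw [← hclosed.closure_eq, hd.closure_eq]
  -- the set of accumulation points
  set A : Set 𝕋 := {z | IsAcc S z} with hA
  have hAsub : A ⊆ S := by
    intro z hz
    have := isAcc_mem_closure hz
    rwa [hclosed.closure_eq] at this
  have hAcl : IsClosed A := isClosed_isAcc S
  have hAne : A.Nonempty := by
    obtain ⟨z, hzS, hz⟩ := exists_isAcc_of_infinite hfin hclosed
    exact ⟨z, hz⟩
  have hApow : ∀ x ∈ A, ∀ m n : ℕ, ((2^m * 3^n : ℕ) : ℤ) • x ∈ A := by
    intro x hx m n
    have h1 : (0:ℕ) < 2^m * 3^n := by positivity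
    exact isAcc_smul hx h1 (fun y hy => hpow y hy m n)
  by_cases htor : ∃ r ∈ A, ∃ m : ℕ, 1 ≤ m ∧ (m:ℤ) • r = 0
  · obtain ⟨r, hrA, m, hm, h0⟩ := htor
    exact dense_of_torsion_acc hclosed hpow (hAsub hrA) hrA hm h0
  · push_neg at htor
    have hTF : TorsionFree A := by
      intro x hx m hm
      exact htor x hx m hm
    -- density via 1/5^i nets
    intro w
    rw [Metric.mem_closure_iff]
    intro ε hε
    obtain ⟨i, hi⟩ := pow_unbounded_of_one_lt (1/ε) (by norm_num : (1:ℝ) < 5)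
    set q : ℕ := 5^i with hq
    have hq0 : 0 < q := by positivity
    have hqR : (0:ℝ) < (q:ℝ) := by exact_mod_cast hq0
    have hqε : ((q:ℝ))⁻¹ < ε := by
      have h5 : ((5:ℝ))^i = (q:ℝ) := by rw [hq]; push_cast; ring
      have h1ε : 1/ε < (q:ℝ) := h5 ▸ hi
      rw [div_lt_iff₀ hε] at h1ε
      have hq1 : (q:ℝ)⁻¹ * (q:ℝ) = 1 := inv_mul_cancel₀ hqR.ne'
      nlinarith [mul_lt_mul_of_pos_left h1ε (inv_pos.mpr hqR), hq1]
    set s : ℕ := q.totient with hs_def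
    have hs : 1 ≤ s := Nat.totient_pos.mpr hq0
    have hc2 : Nat.Coprime 2 q := Nat.Coprime.pow_right i (by norm_num)
    have hc3 : Nat.Coprime 3 q := Nat.Coprime.pow_right i (by norm_num)
    have h2mod : (2:ℕ)^s ≡ 1 [MOD q] := Nat.ModEq.pow_totient hc2
    have h3mod : (3:ℕ)^s ≡ 1 [MOD q] := Nat.ModEq.pow_totient hc3
    set τ : 𝕋 := ((((q:ℝ))⁻¹ : ℝ) : 𝕋) with hτdef
    have hτ0 : (q:ℤ) • τ = 0 := by
      rw [hτdef, zsmul_coe]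
      push_cast
      rw [mul_inv_cancel₀ hqR.ne']
      exact coe_one_zero
    have hfix : ∀ a b : ℕ, ((2^(s*a) * 3^(s*b) : ℕ) : ℤ) • τ = τ :=
      fun a b => Nsmul_tau_eq h2mod h3mod hτ0 a b
    have hAinv : Inv2 s s A := fun x hx a b => hApow x hx (s*a) (s*b)
    obtain ⟨x, hx⟩ := exists_progression hs hs hAne hAcl hAinv hTF τ hfix q
    -- find the right j
    obtain ⟨c, hcI, hc⟩ := exists_lift 0 (w - x)
    have hc0 : 0 ≤ c := by simpa using hcI.1
    have hc1 : c < 1 := by simpa using hcI.2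
    set j : ℕ := ⌊c * q⌋₊ with hj
    have hjq : j ≤ q := by
      have : c * q < q := by nlinarith
      have hlt : j < q := by
        rw [hj]
        rw [Nat.floor_lt (by positivity)]
        exact this
      omega
    have hjle : (j:ℝ) ≤ c * q := Nat.floor_le (by positivity)
    have hjgt : c * q < (j:ℝ) + 1 := Nat.lt_floor_add_one _
    refine ⟨x + (j:ℤ) • τ, hAsub (hx j hjq), ?_⟩
    have hwy : w - (x + (j:ℤ) • τ) = ((c - (j:ℝ) * (q:ℝ)⁻¹ : ℝ) : 𝕋) := by
      rw [hτdef, zsmul_coe, AddCircle.coe_sub]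
      push_cast
      have hwx : w = x + ((c:ℝ) : 𝕋) := by rw [hc]; abel
      rw [hwx]
      abel
    rw [dist_eq_norm, hwy]
    calc ‖((c - (j:ℝ) * (q:ℝ)⁻¹ : ℝ) : 𝕋)‖ ≤ |c - (j:ℝ) * (q:ℝ)⁻¹| := norm_coe_le _
    _ < ε := by
      rw [abs_lt]
      constructor
      · have h0 : (j:ℝ)/(q:ℝ) ≤ c := by
          rw [div_le_iff₀ hqR]
          exact hjle
        rw [div_eq_mul_inv] at h0
        linarith
      · have h1 : c < ((j:ℝ) + 1) / (q:ℝ) := by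
          rw [lt_div_iff₀ hqR]
          exact hjgt
        rw [div_eq_mul_inv, add_mul, one_mul] at h1
        linarith [hqε]
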